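/- Suppose (F*, φ*) is a saddle point of J(F, φ) := f1(G_F) + f2(G_F, φ), where G_F(t; z) = z + tF(z, t), f1(G) = E[L(dG(U;Z)/dt)] and f2(G, φ) = E[φ(G(1;Z))] − E[φ(Y)], with the supremum over all Lipschitz φ, and suppose f2(G_{F*}, φ + φ*) = f2(G_{F*}, φ) + f2(G_{F*}, φ*) for all Lipschitz φ. Then inf_F sup_{φ Lip} J(F, φ) = f1(G_{F*}) and W₁((G_{F*}(1;·))_# ρ_a, ρ_b) = 0, i.e. F* solves the constrained problem inf { f1(G_F) : (G_F(1;·))_# ρ_a = ρ_b } whenever Wasserstein-1 distance zero implies equality of pushforward and target laws. -/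
import Mathlib


open MeasureTheory ProbabilityTheory
open scoped ProbabilityTheory NNReal

noncomputable section

variable {d : ℕ}

/-- The reparameterized trajectory `G_F(t; z) = z + t F(z, t)`. -/
def GF (F : EuclideanSpace ℝ (Fin d) → ℝ → EuclideanSpace ℝ (Fin d))
    (t : ℝ) (z : EuclideanSpace ℝ (Fin d)) : EuclideanSpace ℝ (Fin d) :=
  z + t • F z t

/-- The Kantorovich–Rubinstein dual functional `W₁`. -/
def W1 (μ ν : Measure (EuclideanSpace ℝ (Fin d))) : ℝ :=
  sSup {r : ℝ | ∃ φ : EuclideanSpace ℝ (Fin d) → ℝ, LipschitzWith 1 φ ∧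
    r = ∫ x, φ x ∂μ - ∫ x, φ x ∂ν}

/-- Theorem 1 of the paper, consistency of the min-max formulation:
if `(F*, φ*)` is a saddle point of `J(F, φ) = f1(G_F) + f2(G_F, φ)` (sup over Lipschitz
critics `φ`), and `f2(G_{F*}, ·)` is additive against `φ*` on Lipschitz functions, then
`inf_F sup_φ J(F,φ) = f1(G_{F*})`, the Wasserstein-1 distance between
`(G_{F*}(1;·))_# ρ_a` and `ρ_b` vanishes, and (whenever vanishing `W₁` implies equality
of laws) `F*` solves the constrained problem `inf {f1(G_F) : (G_F(1;·))_# ρ_a = ρ_b}`. -/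
theorem stmt_5 {Ω : Type*} [MeasureSpace Ω] [IsProbabilityMeasure (ℙ : Measure Ω)]
    (Z Y : Ω → EuclideanSpace ℝ (Fin d)) (U : Ω → ℝ)
    (hZ : Measurable Z) (hY : Measurable Y) (hU : Measurable U)
    (hUlaw : Measure.map U (ℙ : Measure Ω) = (volume : Measure ℝ).restrict (Set.Icc 0 1))
    (L : EuclideanSpace ℝ (Fin d) → ℝ)
    (f1 : (EuclideanSpace ℝ (Fin d) → ℝ → EuclideanSpace ℝ (Fin d)) → ℝ)
    (hf1 : ∀ F, f1 F = ∫ ω, L (deriv (fun t => GF F t (Z ω)) (U ω)) ∂(ℙ : Measure Ω))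
    (f2 : (EuclideanSpace ℝ (Fin d) → ℝ → EuclideanSpace ℝ (Fin d)) →
      (EuclideanSpace ℝ (Fin d) → ℝ) → ℝ)
    (hf2 : ∀ F φ, f2 F φ =
      (∫ ω, φ (GF F 1 (Z ω)) ∂(ℙ : Measure Ω)) - ∫ ω, φ (Y ω) ∂(ℙ : Measure Ω))
    (J : (EuclideanSpace ℝ (Fin d) → ℝ → EuclideanSpace ℝ (Fin d)) →
      (EuclideanSpace ℝ (Fin d) → ℝ) → ℝ)
    (hJ : ∀ F φ, J F φ = f1 F + f2 F φ)
    (Fs : EuclideanSpace ℝ (Fin d) → ℝ → EuclideanSpace ℝ (Fin d))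
    (φs : EuclideanSpace ℝ (Fin d) → ℝ) (hφs : ∃ K : ℝ≥0, LipschitzWith K φs)
    -- φ* maximizes J(F*, ·) over Lipschitz functions
    (hmax : ∀ φ : EuclideanSpace ℝ (Fin d) → ℝ,
      (∃ K : ℝ≥0, LipschitzWith K φ) → J Fs φ ≤ J Fs φs)
    -- F* minimizes F ↦ sup_{φ Lipschitz} J(F, φ)
    (hmin : ∀ F, sSup {r : ℝ | ∃ φ, (∃ K : ℝ≥0, LipschitzWith K φ) ∧ r = J Fs φ} ≤
      sSup {r : ℝ | ∃ φ, (∃ K : ℝ≥0, LipschitzWith K φ) ∧ r = J F φ})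
    -- additivity of f2(G_{F*}, ·) against φ* on Lipschitz functions
    (hadd : ∀ φ : EuclideanSpace ℝ (Fin d) → ℝ, (∃ K : ℝ≥0, LipschitzWith K φ) →
      f2 Fs (φ + φs) = f2 Fs φ + f2 Fs φs) :
    -- (1) inf over F of sup over Lipschitz φ of J equals f1(G_{F*})
    sInf {s : ℝ | ∃ F, s = sSup {r : ℝ | ∃ φ,
        (∃ K : ℝ≥0, LipschitzWith K φ) ∧ r = J F φ}} = f1 Fs ∧
    -- (2) W₁((G_{F*}(1;·))_# ρ_a, ρ_b) = 0
    W1 (Measure.map (GF Fs 1) (Measure.map Z (ℙ : Measure Ω)))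
      (Measure.map Y (ℙ : Measure Ω)) = 0 ∧
    -- (3) F* solves the constrained problem whenever W₁ = 0 forces equality of laws
    ((∀ μ ν : Measure (EuclideanSpace ℝ (Fin d)), W1 μ ν = 0 → μ = ν) →
      Measure.map (GF Fs 1) (Measure.map Z (ℙ : Measure Ω)) =
        Measure.map Y (ℙ : Measure Ω) ∧
      ∀ F, Measure.map (GF F 1) (Measure.map Z (ℙ : Measure Ω)) =
        Measure.map Y (ℙ : Measure Ω) → f1 Fs ≤ f1 F) := by
  classical
  haveI hν : IsProbabilityMeasure (Measure.map Y (ℙ : Measure Ω)) :=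
    Measure.isProbabilityMeasure_map hY.aemeasurable
  -- f2 Fs vanishes on Lipschitz functions
  have hle : ∀ φ : EuclideanSpace ℝ (Fin d) → ℝ, (∃ K : ℝ≥0, LipschitzWith K φ) →
      f2 Fs φ ≤ 0 := by
    rintro φ ⟨K, hK⟩
    obtain ⟨Ks, hKs⟩ := hφs
    have h := hmax (φ + φs) ⟨K + Ks, hK.add hKs⟩
    rw [hJ, hJ, hadd φ ⟨K, hK⟩] at h
    linarith
  have hzero : ∀ φ : EuclideanSpace ℝ (Fin d) → ℝ, (∃ K : ℝ≥0, LipschitzWith K φ) →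
      f2 Fs φ = 0 := by
    rintro φ ⟨K, hK⟩
    have h1 := hle φ ⟨K, hK⟩
    have h2 := hle (-φ) ⟨K, hK.neg⟩
    have h3 : f2 Fs (-φ) = - f2 Fs φ := by
      rw [hf2, hf2]
      simp [integral_neg]
      ring
    linarith
  have hJFs : ∀ φ, (∃ K : ℝ≥0, LipschitzWith K φ) → J Fs φ = f1 Fs := by
    intro φ hφ; rw [hJ, hzero φ hφ, add_zero]
  have hset : {r : ℝ | ∃ φ, (∃ K : ℝ≥0, LipschitzWith K φ) ∧ r = J Fs φ} = {f1 Fs} := by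
    ext r; constructor
    · rintro ⟨φ, hφ, rfl⟩; exact hJFs φ hφ
    · rintro rfl
      exact ⟨fun _ => 0, ⟨0, LipschitzWith.const 0⟩,
        (hJFs _ ⟨0, LipschitzWith.const 0⟩).symm⟩
  have hsupFs : sSup {r : ℝ | ∃ φ, (∃ K : ℝ≥0, LipschitzWith K φ) ∧ r = J Fs φ}
      = f1 Fs := by
    rw [hset]; exact csSup_singleton _
  -- Part 1
  have hpart1 : sInf {s : ℝ | ∃ F, s = sSup {r : ℝ | ∃ φ,
      (∃ K : ℝ≥0, LipschitzWith K φ) ∧ r = J F φ}} = f1 Fs := by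
    apply le_antisymm
    · exact csInf_le ⟨f1 Fs, by rintro s ⟨F, rfl⟩; rw [← hsupFs]; exact hmin F⟩
        ⟨Fs, hsupFs.symm⟩
    · refine le_csInf ⟨_, ⟨Fs, rfl⟩⟩ ?_
      rintro s ⟨F, rfl⟩
      rw [← hsupFs]; exact hmin F
  -- change of variables
  have hkey : ∀ (F : EuclideanSpace ℝ (Fin d) → ℝ → EuclideanSpace ℝ (Fin d))
      (φ : EuclideanSpace ℝ (Fin d) → ℝ) (K : ℝ≥0), LipschitzWith K φ →
      AEMeasurable (GF F 1) (Measure.map Z (ℙ : Measure Ω)) →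
      (∫ x, φ x ∂(Measure.map (GF F 1) (Measure.map Z (ℙ : Measure Ω)))) -
        (∫ x, φ x ∂(Measure.map Y (ℙ : Measure Ω))) = f2 F φ := by
    intro F φ K hK hmeas
    rw [hf2]
    congr 1
    · rw [integral_map hmeas hK.continuous.aestronglyMeasurable]
      exact integral_map hZ.aemeasurable
        (hK.continuous.measurable.comp_aemeasurable hmeas).aestronglyMeasurable
    · rw [integral_map hY.aemeasurable hK.continuous.aestronglyMeasurable]
  -- Part 2
  have hpart2 : W1 (Measure.map (GF Fs 1) (Measure.map Z (ℙ : Measure Ω)))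
      (Measure.map Y (ℙ : Measure Ω)) = 0 := by
    by_cases hmeas : AEMeasurable (GF Fs 1) (Measure.map Z (ℙ : Measure Ω))
    · have hsetW : {r : ℝ | ∃ φ : EuclideanSpace ℝ (Fin d) → ℝ, LipschitzWith 1 φ ∧
          r = (∫ x, φ x ∂(Measure.map (GF Fs 1) (Measure.map Z (ℙ : Measure Ω)))) -
            ∫ x, φ x ∂(Measure.map Y (ℙ : Measure Ω))} = {0} := by
        ext r; constructor
        · rintro ⟨φ, hφ, rfl⟩
          have := hkey Fs φ 1 hφ hmeas
          rw [this, hzero φ ⟨1, hφ⟩]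
          rfl
        · rintro rfl
          exact ⟨fun _ => 0, (LipschitzWith.const 0).weaken zero_le_one, by simp⟩
      rw [W1, hsetW]; exact csSup_singleton _
    · rw [W1, Measure.map_of_not_aemeasurable hmeas]
      have hmem : ∀ c : ℝ, (-c) ∈ {r : ℝ | ∃ φ : EuclideanSpace ℝ (Fin d) → ℝ,
          LipschitzWith 1 φ ∧
          r = (∫ x, φ x ∂(0 : Measure (EuclideanSpace ℝ (Fin d)))) -
            ∫ x, φ x ∂(Measure.map Y (ℙ : Measure Ω))} := by
        intro c
        refine ⟨fun _ => c, (LipschitzWith.const c).weaken zero_le_one, ?_⟩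
        simp [integral_const]
      have hnb : ¬ BddAbove {r : ℝ | ∃ φ : EuclideanSpace ℝ (Fin d) → ℝ,
          LipschitzWith 1 φ ∧
          r = (∫ x, φ x ∂(0 : Measure (EuclideanSpace ℝ (Fin d)))) -
            ∫ x, φ x ∂(Measure.map Y (ℙ : Measure Ω))} := by
        rintro ⟨b, hb⟩
        have := hb (hmem (-(b + 1)))
        simp at this
        linarith
      exact Real.sSup_of_not_bddAbove hnb
  refine ⟨hpart1, hpart2, fun hW => ?_⟩
  have heq := hW _ _ hpart2
  refine ⟨heq, fun F hF => ?_⟩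
  have hmeasF : AEMeasurable (GF F 1) (Measure.map Z (ℙ : Measure Ω)) := by
    by_contra h
    rw [Measure.map_of_not_aemeasurable h] at hF
    exact IsProbabilityMeasure.ne_zero (Measure.map Y (ℙ : Measure Ω)) hF.symm
  have hJF : ∀ φ, (∃ K : ℝ≥0, LipschitzWith K φ) → J F φ = f1 F := by
    rintro φ ⟨K, hK⟩
    have h := hkey F φ K hK hmeasF
    rw [hF, sub_self] at h
    rw [hJ, ← h, add_zero]
  have hsetF : {r : ℝ | ∃ φ, (∃ K : ℝ≥0, LipschitzWith K φ) ∧ r = J F φ} = {f1 F} := by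
    ext r; constructor
    · rintro ⟨φ, hφ, rfl⟩; exact hJF φ hφ
    · rintro rfl
      exact ⟨fun _ => 0, ⟨0, LipschitzWith.const 0⟩,
        (hJF _ ⟨0, LipschitzWith.const 0⟩).symm⟩
  have := hmin F
  rw [hsupFs, hsetF, csSup_singleton] at this
  exact this

end
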